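/- Let K be an isolated non-saddle compact invariant set of a flow on a compact metric space M. If K has a positively or negatively dissonant point in I(K), then K has an externally dissonant point. -/

import Mathlib

open Set Filter Topology

variable {M : Type*}

/-- The positive semi-trajectory `γ⁺(x)`. -/
def posOrbit [TopologicalSpace M] (φ : Flow ℝ M) (x : M) : Set M :=
  {y | ∃ t : ℝ, 0 ≤ t ∧ φ t x = y}

/-- The negative semi-trajectory `γ⁻(x)`. -/
def negOrbit [TopologicalSpace M] (φ : Flow ℝ M) (x : M) : Set M :=
  {y | ∃ t : ℝ, t ≤ 0 ∧ φ t x = y}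

/-- The omega-limit set `ω(x) = ⋂_{t>0} closure (x·[t,∞))`. -/
def omegaLim [TopologicalSpace M] (φ : Flow ℝ M) (x : M) : Set M :=
  ⋂ t ∈ Set.Ioi (0:ℝ), closure {y | ∃ s : ℝ, t ≤ s ∧ φ s x = y}

/-- The negative omega-limit set `ω*(x) = ⋂_{t<0} closure (x·(-∞,t])`. -/
def alphaLim [TopologicalSpace M] (φ : Flow ℝ M) (x : M) : Set M :=
  ⋂ t ∈ Set.Iio (0:ℝ), closure {y | ∃ s : ℝ, s ≤ t ∧ φ s x = y}

/-- `K` is invariant under the flow. -/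
def FlowInvariant [TopologicalSpace M] (φ : Flow ℝ M) (K : Set M) : Prop :=
  ∀ x ∈ K, ∀ t : ℝ, φ t x ∈ K

/-- `K` is a compact invariant set which is the maximal invariant subset of some
compact neighborhood (an isolated invariant compactum). -/
def IsIsolatedInv [TopologicalSpace M] (φ : Flow ℝ M) (K : Set M) : Prop :=
  IsCompact K ∧ FlowInvariant φ K ∧
    ∃ N : Set M, IsCompact N ∧ K ⊆ interior N ∧
      ∀ x ∈ N, (∀ t : ℝ, φ t x ∈ N) → x ∈ K

/-- `K` is saddle: it admits a neighborhood `U` such that every neighborhood `V` of `K`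
contains a point whose positive and negative semi-trajectories both leave `U`. -/
def Saddle [TopologicalSpace M] (φ : Flow ℝ M) (K : Set M) : Prop :=
  ∃ U : Set M, K ⊆ interior U ∧ ∀ V : Set M, K ⊆ interior V →
    ∃ x ∈ V, ¬ posOrbit φ x ⊆ U ∧ ¬ negOrbit φ x ⊆ U

/-- `K` is non-saddle: every neighborhood `U` of `K` contains a neighborhood `V` of `K`
such that every point of `V` has `γ⁺(x) ⊆ U` or `γ⁻(x) ⊆ U`. -/
def NonSaddle [TopologicalSpace M] (φ : Flow ℝ M) (K : Set M) : Prop :=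
  ∀ U : Set M, K ⊆ interior U → ∃ V : Set M, K ⊆ interior V ∧ V ⊆ U ∧
    ∀ x ∈ V, posOrbit φ x ⊆ U ∨ negOrbit φ x ⊆ U

/-- The stable manifold (region of attraction) `A(K)`. -/
def Aset [TopologicalSpace M] (φ : Flow ℝ M) (K : Set M) : Set M :=
  {x | (omegaLim φ x).Nonempty ∧ omegaLim φ x ⊆ K}

/-- The unstable manifold (region of repulsion) `R(K)`. -/
def Rset [TopologicalSpace M] (φ : Flow ℝ M) (K : Set M) : Set M :=
  {x | (alphaLim φ x).Nonempty ∧ alphaLim φ x ⊆ K}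

/-- The region of influence `I(K) = A(K) ∪ R(K)`. -/
def Iset [TopologicalSpace M] (φ : Flow ℝ M) (K : Set M) : Set M :=
  Aset φ K ∪ Rset φ K

/-- `H(K) = A(K) ∩ R(K)`. -/
def Hset [TopologicalSpace M] (φ : Flow ℝ M) (K : Set M) : Set M :=
  Aset φ K ∩ Rset φ K

/-- The positive prolongational limit set `J⁺(x)`. -/
def Jplus [TopologicalSpace M] (φ : Flow ℝ M) (x : M) : Set M :=
  {y | ∃ (xs : ℕ → M) (ts : ℕ → ℝ), Tendsto xs atTop (𝓝 x) ∧
    Tendsto ts atTop atTop ∧ Tendsto (fun n => φ (ts n) (xs n)) atTop (𝓝 y)}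

/-- The negative prolongational limit set `J⁻(x)`. -/
def Jminus [TopologicalSpace M] (φ : Flow ℝ M) (x : M) : Set M :=
  {y | ∃ (xs : ℕ → M) (ts : ℕ → ℝ), Tendsto xs atTop (𝓝 x) ∧
    Tendsto ts atTop atBot ∧ Tendsto (fun n => φ (ts n) (xs n)) atTop (𝓝 y)}

/-- The two-sided prolongational limit set `J*(x)`. -/
def Jstar [TopologicalSpace M] (φ : Flow ℝ M) (x : M) : Set (M × M) :=
  {p | ∃ (xs : ℕ → M) (ts ss : ℕ → ℝ), Tendsto xs atTop (𝓝 x) ∧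
    Tendsto ts atTop atTop ∧ Tendsto ss atTop atBot ∧
    Tendsto (fun n => φ (ts n) (xs n)) atTop (𝓝 p.1) ∧
    Tendsto (fun n => φ (ss n) (xs n)) atTop (𝓝 p.2)}

/-- `x ∈ I(K)` is positively dissonant. -/
def PosDissonant [TopologicalSpace M] (φ : Flow ℝ M) (K : Set M) (x : M) : Prop :=
  x ∈ Iset φ K ∧ x ∉ Aset φ K ∧ (Jplus φ x ∩ K).Nonempty

/-- `x ∈ I(K)` is negatively dissonant. -/
def NegDissonant [TopologicalSpace M] (φ : Flow ℝ M) (K : Set M) (x : M) : Prop :=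
  x ∈ Iset φ K ∧ x ∉ Rset φ K ∧ (Jminus φ x ∩ K).Nonempty

/-- `x ∉ I(K)` is externally dissonant. -/
def ExtDissonant [TopologicalSpace M] (φ : Flow ℝ M) (K : Set M) (x : M) : Prop :=
  x ∉ Iset φ K ∧ (Jstar φ x ∩ K ×ˢ K).Nonempty

/-- `x` is a dissonant point of `K`. -/
def Dissonant [TopologicalSpace M] (φ : Flow ℝ M) (K : Set M) (x : M) : Prop :=
  PosDissonant φ K x ∨ NegDissonant φ K x ∨ ExtDissonant φ K x

/-- `N` is an isolating block for `K` with entrance set `Ni` and exit set `No`. -/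
structure IsolatingBlock [TopologicalSpace M] (φ : Flow ℝ M) (K N Ni No : Set M) : Prop where
  compact_N : IsCompact N
  nbhd : K ⊆ interior N
  maximal : ∀ x ∈ N, (∀ t : ℝ, φ t x ∈ N) → x ∈ K
  compact_Ni : IsCompact Ni
  compact_No : IsCompact No
  Ni_sub : Ni ⊆ frontier N
  No_sub : No ⊆ frontier N
  cover : frontier N = Ni ∪ No
  entrance : ∀ x ∈ Ni, ∃ ε > (0:ℝ), ∀ t ∈ Set.Ico (-ε) (0:ℝ), φ t x ∉ N
  exitSet : ∀ x ∈ No, ∃ δ > (0:ℝ), ∀ t ∈ Set.Ioc (0:ℝ) δ, φ t x ∉ N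
  tang_neg : ∀ x ∈ frontier N \ Ni, ∃ ε > (0:ℝ), ∀ t ∈ Set.Ico (-ε) (0:ℝ), φ t x ∈ interior N
  tang_pos : ∀ x ∈ frontier N \ No, ∃ δ > (0:ℝ), ∀ t ∈ Set.Ioc (0:ℝ) δ, φ t x ∈ interior N

/-- `p` is strongly influenced by `K`. -/
def StronglyInfluenced [TopologicalSpace M] (φ : Flow ℝ M) (K : Set M) (p : M) : Prop :=
  ∃ U ∈ 𝓝 p, ∀ V : Set M, K ⊆ interior V → ∃ T : ℝ, 0 ≤ T ∧ ∀ x ∈ U,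
    (∀ t : ℝ, T ≤ t → φ t x ∈ V) ∨ (∀ t : ℝ, t ≤ -T → φ t x ∈ V)

/-- `p` is strongly attracted by `K`. -/
def StronglyAttracted [TopologicalSpace M] (φ : Flow ℝ M) (K : Set M) (p : M) : Prop :=
  ∃ U ∈ 𝓝 p, ∀ V : Set M, K ⊆ interior V → ∃ T : ℝ, 0 ≤ T ∧ ∀ x ∈ U,
    ∀ t : ℝ, T ≤ t → φ t x ∈ V

/-- `p` is strongly repelled by `K`. -/
def StronglyRepelled [TopologicalSpace M] (φ : Flow ℝ M) (K : Set M) (p : M) : Prop :=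
  ∃ U ∈ 𝓝 p, ∀ V : Set M, K ⊆ interior V → ∃ T : ℝ, 0 ≤ T ∧ ∀ x ∈ U,
    ∀ t : ℝ, t ≤ -T → φ t x ∈ V

/-- `K` is (positively) stable. -/
def IsStable [TopologicalSpace M] (φ : Flow ℝ M) (K : Set M) : Prop :=
  ∀ U : Set M, K ⊆ interior U → ∃ V : Set M, K ⊆ interior V ∧ V ⊆ U ∧
    ∀ x ∈ V, ∀ t : ℝ, 0 ≤ t → φ t x ∈ V

/-- `K` is negatively stable. -/
def IsNegStable [TopologicalSpace M] (φ : Flow ℝ M) (K : Set M) : Prop :=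
  ∀ U : Set M, K ⊆ interior U → ∃ V : Set M, K ⊆ interior V ∧ V ⊆ U ∧
    ∀ x ∈ V, ∀ t : ℝ, t ≤ 0 → φ t x ∈ V

/-- `K` is an attractor: stable and attracting some neighborhood. -/
def IsAttractor [TopologicalSpace M] (φ : Flow ℝ M) (K : Set M) : Prop :=
  IsStable φ K ∧ ∃ W : Set M, K ⊆ interior W ∧ W ⊆ Aset φ K

/-- `K` is a repeller: negatively stable and repelling some neighborhood. -/
def IsRepeller [TopologicalSpace M] (φ : Flow ℝ M) (K : Set M) : Prop :=
  IsNegStable φ K ∧ ∃ W : Set M, K ⊆ interior W ∧ W ⊆ Rset φ K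

section Helpers
variable [MetricSpace M] (φ : Flow ℝ M)

lemma phi_cont_t (x : M) : Continuous fun t : ℝ => φ t x :=
  φ.continuous continuous_id continuous_const

lemma phi_cont_x (t : ℝ) : Continuous fun x : M => φ t x :=
  φ.continuous continuous_const continuous_id

lemma mem_omegaLim_of_seq {x q : M} (s : ℕ → ℝ) (hs : Tendsto s atTop atTop)
    (hconv : Tendsto (fun n => φ (s n) x) atTop (𝓝 q)) : q ∈ omegaLim φ x := by
  refine mem_iInter₂.2 fun t _ => Metric.mem_closure_iff.2 fun ε hε => ?_
  obtain ⟨n, hn1, hn2⟩ := ((hs.eventually_ge_atTop t).and (Metric.tendsto_nhds.1 hconv ε hε)).exists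
  exact ⟨φ (s n) x, ⟨s n, hn1, rfl⟩, by rwa [dist_comm]⟩

lemma mem_alphaLim_of_seq {x q : M} (s : ℕ → ℝ) (hs : Tendsto s atTop atBot)
    (hconv : Tendsto (fun n => φ (s n) x) atTop (𝓝 q)) : q ∈ alphaLim φ x := by
  refine mem_iInter₂.2 fun t _ => Metric.mem_closure_iff.2 fun ε hε => ?_
  obtain ⟨n, hn1, hn2⟩ := ((hs.eventually_le_atBot t).and (Metric.tendsto_nhds.1 hconv ε hε)).exists
  exact ⟨φ (s n) x, ⟨s n, hn1, rfl⟩, by rwa [dist_comm]⟩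

lemma omegaLim_seq {x q : M} (h : q ∈ omegaLim φ x) :
    ∃ s : ℕ → ℝ, (∀ n : ℕ, (n:ℝ) + 1 ≤ s n) ∧ Tendsto (fun n => φ (s n) x) atTop (𝓝 q) := by
  have key : ∀ n : ℕ, ∃ sn : ℝ, ((n:ℝ)+1 ≤ sn) ∧ dist (φ sn x) q < 1/(n+1) := by
    intro n
    have h1 := mem_iInter₂.1 h ((n:ℝ)+1) (mem_Ioi.2 (by positivity))
    obtain ⟨y, ⟨sn, hsn, rfl⟩, hd⟩ := Metric.mem_closure_iff.1 h1 (1/(n+1)) (by positivity)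
    exact ⟨sn, hsn, by rwa [dist_comm]⟩
  choose s h1 h2 using key
  refine ⟨s, h1, tendsto_iff_dist_tendsto_zero.2 ?_⟩
  exact squeeze_zero (fun n => dist_nonneg) (fun n => (h2 n).le)
    tendsto_one_div_add_atTop_nhds_zero_nat

lemma alphaLim_seq {x q : M} (h : q ∈ alphaLim φ x) :
    ∃ s : ℕ → ℝ, (∀ n : ℕ, s n ≤ -((n:ℝ) + 1)) ∧ Tendsto (fun n => φ (s n) x) atTop (𝓝 q) := by
  have key : ∀ n : ℕ, ∃ sn : ℝ, (sn ≤ -((n:ℝ)+1)) ∧ dist (φ sn x) q < 1/(n+1) := by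
    intro n
    have h1 := mem_iInter₂.1 h (-((n:ℝ)+1)) (mem_Iio.2 (neg_neg_iff_pos.2 (by positivity)))
    obtain ⟨y, ⟨sn, hsn, rfl⟩, hd⟩ := Metric.mem_closure_iff.1 h1 (1/(n+1)) (by positivity)
    exact ⟨sn, hsn, by rwa [dist_comm]⟩
  choose s h1 h2 using key
  refine ⟨s, h1, tendsto_iff_dist_tendsto_zero.2 ?_⟩
  exact squeeze_zero (fun n => dist_nonneg) (fun n => (h2 n).le)
    tendsto_one_div_add_atTop_nhds_zero_nat

lemma natCast_add_one_tendsto : Tendsto (fun n : ℕ => (n:ℝ) + 1) atTop atTop :=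
  tendsto_atTop_add_const_right _ 1 tendsto_natCast_atTop_atTop

lemma omegaLim_nonempty [CompactSpace M] (x : M) : (omegaLim φ x).Nonempty := by
  obtain ⟨a, -, g, hg, hconv⟩ := isCompact_univ.tendsto_subseq (fun n : ℕ => mem_univ (φ n x))
  exact ⟨a, mem_omegaLim_of_seq φ (fun n => ((g n : ℕ) : ℝ))
    (tendsto_natCast_atTop_atTop.comp hg.tendsto_atTop) hconv⟩

lemma alphaLim_nonempty [CompactSpace M] (x : M) : (alphaLim φ x).Nonempty := by
  obtain ⟨a, -, g, hg, hconv⟩ := isCompact_univ.tendsto_subseq (fun n : ℕ => mem_univ (φ (-(n:ℝ)) x))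
  refine ⟨a, mem_alphaLim_of_seq φ (fun n => -((g n : ℕ) : ℝ)) ?_ hconv⟩
  exact tendsto_neg_atTop_atBot.comp (tendsto_natCast_atTop_atTop.comp hg.tendsto_atTop)

lemma omegaLim_inv {x : M} {q : M} (h : q ∈ omegaLim φ x) (t : ℝ) : φ t q ∈ omegaLim φ x := by
  obtain ⟨s, h1, h2⟩ := omegaLim_seq φ h
  refine mem_omegaLim_of_seq φ (fun n => t + s n) ?_ ?_
  · exact tendsto_atTop_add_const_left _ t (tendsto_atTop_mono h1 natCast_add_one_tendsto)
  · have heq : ∀ n, φ (t + s n) x = φ t (φ (s n) x) := fun n => φ.map_add _ _ _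
    simp only [heq]
    exact ((phi_cont_x φ t).continuousAt.tendsto).comp h2

end Helpers


section Main
variable [MetricSpace M] [CompactSpace M]

lemma mem_Aset_of_eventually_in_N (φ : Flow ℝ M) {K N : Set M}
    (hNcpt : IsCompact N) (hNmax : ∀ y ∈ N, (∀ t : ℝ, φ t y ∈ N) → y ∈ K)
    {x : M} {c : ℝ} (h : ∀ s : ℝ, c ≤ s → φ s x ∈ N) : x ∈ Aset φ K := by
  have hsub : omegaLim φ x ⊆ N := by
    intro q hq
    have h1 : q ∈ closure {y | ∃ s : ℝ, max c 1 ≤ s ∧ φ s x = y} :=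
      mem_iInter₂.1 hq _ (mem_Ioi.2 (lt_of_lt_of_le one_pos (le_max_right c 1)))
    have h2 : {y | ∃ s : ℝ, max c 1 ≤ s ∧ φ s x = y} ⊆ N := by
      rintro y ⟨s, hs, rfl⟩
      exact h s (le_trans (le_max_left c 1) hs)
    exact (hNcpt.isClosed.closure_subset_iff.2 h2) h1
  exact ⟨omegaLim_nonempty φ x, fun q hq =>
    hNmax q (hsub hq) fun t => hsub (omegaLim_inv φ hq t)⟩

lemma key_pos (φ : Flow ℝ M) (K : Set M)
    (hIso : IsIsolatedInv φ K) (hNS : NonSaddle φ K)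
    {x : M} (hx : PosDissonant φ K x) : ∃ y : M, ExtDissonant φ K y := by
  obtain ⟨hxI, hxA, k, hkJ, hkK⟩ := hx
  obtain ⟨hKcpt, hKinv, N, hNcpt, hKN, hNmax⟩ := hIso
  have hxR : x ∈ Rset φ K := hxI.resolve_left hxA
  obtain ⟨⟨k', hk'α⟩, hαK⟩ := hxR
  have hk'K : k' ∈ K := hαK hk'α
  obtain ⟨xs0, ts0, hxs0, hts0, hconv0⟩ := hkJ
  -- dichotomy neighborhood V and closed thickening V₁
  obtain ⟨V, hKV, hVN, hdich⟩ := hNS N hKN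
  obtain ⟨ε, hε, hV₁sub⟩ := hKcpt.exists_cthickening_subset_open isOpen_interior hKV
  set V₁ : Set M := Metric.cthickening ε K with hV₁def
  have hV₁closed : IsClosed V₁ := Metric.isClosed_cthickening
  have hKintV₁ : K ⊆ interior V₁ :=
    (Metric.self_subset_thickening hε K).trans
      (interior_maximal (Metric.thickening_subset_cthickening ε K) Metric.isOpen_thickening)
  have hV₁V : V₁ ⊆ V := hV₁sub.trans interior_subset
  have hV₁cpt : IsCompact V₁ := hV₁closed.isCompact
  -- a time T ≥ 0 where the orbit of x leaves N
  obtain ⟨T, hT0, hTN⟩ : ∃ T : ℝ, 0 ≤ T ∧ φ T x ∉ N := by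
    by_contra hc
    push_neg at hc
    exact hxA (mem_Aset_of_eventually_in_N φ hNcpt hNmax (c := 0) fun s hs => hc s hs)
  -- reindex so that all eventual properties hold for all n
  have hE1 : ∀ᶠ n in atTop, φ T (xs0 n) ∉ N := by
    have hopen : IsOpen {z : M | φ T z ∉ N} :=
      hNcpt.isClosed.isOpen_compl.preimage (phi_cont_x φ T)
    exact (hxs0.eventually_mem (hopen.mem_nhds hTN)).mono fun n h => h
  have hE2 : ∀ᶠ n in atTop, φ (ts0 n) (xs0 n) ∈ V₁ := by
    have : V₁ ∈ 𝓝 k := mem_nhds_iff.2 ⟨interior V₁, interior_subset, isOpen_interior, hKintV₁ hkK⟩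
    exact hconv0.eventually_mem this
  have hE3 : ∀ᶠ n in atTop, T ≤ ts0 n := hts0.eventually_ge_atTop T
  obtain ⟨n₀, hn₀⟩ := eventually_atTop.1 ((hE1.and hE2).and hE3)
  set xs : ℕ → M := fun n => xs0 (n + n₀) with hxsdef
  set ts : ℕ → ℝ := fun n => ts0 (n + n₀) with htsdef
  have hshift : Tendsto (fun n : ℕ => n + n₀) atTop atTop := tendsto_add_atTop_nat n₀
  have hxs : Tendsto xs atTop (𝓝 x) := hxs0.comp hshift
  have hts : Tendsto ts atTop atTop := hts0.comp hshift
  have hconv : Tendsto (fun n => φ (ts n) (xs n)) atTop (𝓝 k) := hconv0.comp hshift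
  have A1 : ∀ n, φ T (xs n) ∉ N := fun n => ((hn₀ _ (Nat.le_add_left n₀ n)).1).1
  have A2 : ∀ n, φ (ts n) (xs n) ∈ V₁ := fun n => ((hn₀ _ (Nat.le_add_left n₀ n)).1).2
  have A3 : ∀ n, T ≤ ts n := fun n => (hn₀ _ (Nat.le_add_left n₀ n)).2
  -- first hitting time of V₁
  set S : ℕ → Set ℝ := fun n => {t | t ∈ Icc T (ts n) ∧ φ t (xs n) ∈ V₁} with hSdef
  have hSne : ∀ n, (S n).Nonempty := fun n => ⟨ts n, ⟨A3 n, le_refl _⟩, A2 n⟩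
  have hSbdd : ∀ n, BddBelow (S n) := fun n => ⟨T, fun t ht => ht.1.1⟩
  have hSclosed : ∀ n, IsClosed (S n) := fun n =>
    isClosed_Icc.inter (hV₁closed.preimage (phi_cont_t φ (xs n)))
  set e : ℕ → ℝ := fun n => sInf (S n) with hedef
  have he_mem : ∀ n, e n ∈ S n := fun n => (hSclosed n).csInf_mem (hSne n) (hSbdd n)
  have heT : ∀ n, T ≤ e n := fun n => (he_mem n).1.1
  have he_ts : ∀ n, e n ≤ ts n := fun n => (he_mem n).1.2
  have heV₁ : ∀ n, φ (e n) (xs n) ∈ V₁ := fun n => (he_mem n).2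
  have Step7 : ∀ n, ∀ t : ℝ, T ≤ t → t < e n → φ t (xs n) ∉ V₁ := by
    intro n t h1 h2 hmem
    exact absurd (csInf_le (hSbdd n) ⟨⟨h1, h2.le.trans (he_ts n)⟩, hmem⟩) (not_le.2 h2)
  have Step8 : ∀ n, ∀ s : ℝ, e n ≤ s → φ s (xs n) ∈ N := by
    intro n s hs
    rcases hdich _ (hV₁V (heV₁ n)) with hpos | hneg
    · have hmem : φ s (xs n) ∈ posOrbit φ (φ (e n) (xs n)) := by
        refine ⟨s - e n, by linarith, ?_⟩
        rw [← φ.map_add, sub_add_cancel]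
      exact hpos hmem
    · exfalso
      apply A1 n
      apply hneg
      refine ⟨T - e n, by linarith [heT n], ?_⟩
      rw [← φ.map_add, sub_add_cancel]
  -- Claim A : e → ∞
  have hetop : Tendsto e atTop atTop := by
    by_contra hc
    rw [tendsto_atTop_atTop] at hc
    push_neg at hc
    obtain ⟨C, hC⟩ := hc
    obtain ⟨f, hf, hfe⟩ := Filter.extraction_of_frequently_atTop
      (frequently_atTop.2 fun N₁ => (hC N₁).imp fun n hn => ⟨hn.1, hn.2⟩)
    obtain ⟨c, -, f₂, hf₂, hce⟩ := (isCompact_Icc (a := T) (b := C)).tendsto_subseq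
      (fun i => ⟨heT (f i), (hfe i).le⟩ : ∀ i, e (f i) ∈ Icc T C)
    apply hxA
    apply mem_Aset_of_eventually_in_N φ hNcpt hNmax (c := c + 1)
    intro s hs
    have hxsc : Tendsto (fun i => xs (f (f₂ i))) atTop (𝓝 x) :=
      hxs.comp ((hf.comp hf₂).tendsto_atTop)
    have hev : ∀ᶠ i in atTop, φ s (xs (f (f₂ i))) ∈ N := by
      have hlt : ∀ᶠ i in atTop, e (f (f₂ i)) < c + 1 :=
        hce.eventually_lt_const (by linarith)
      exact hlt.mono fun i hi => Step8 _ s (by linarith)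
    exact hNcpt.isClosed.mem_of_tendsto
      (((phi_cont_x φ s).continuousAt.tendsto).comp hxsc) hev
  -- extract the limit point y
  obtain ⟨y, hyV₁, g, hg, hyg⟩ := hV₁cpt.tendsto_subseq heV₁
  -- backward avoidance, for an arbitrary subsequence
  have P1gen : ∀ (h : ℕ → ℕ), Tendsto h atTop atTop → ∀ w : M,
      Tendsto (fun i => φ (e (h i)) (xs (h i))) atTop (𝓝 w) →
      ∀ t : ℝ, t < 0 → φ t w ∉ interior V₁ := by
    intro h hh w hw t ht hmem
    have hev : ∀ᶠ i in atTop, φ t (φ (e (h i)) (xs (h i))) ∈ V₁ᶜ := by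
      have hge : ∀ᶠ i in atTop, T - t ≤ e (h i) :=
        (hetop.comp hh).eventually_ge_atTop (T - t)
      refine hge.mono fun i hi => ?_
      have heq : φ t (φ (e (h i)) (xs (h i))) = φ (t + e (h i)) (xs (h i)) :=
        (φ.map_add _ _ _).symm
      rw [Set.mem_compl_iff, heq]
      exact Step7 (h i) _ (by linarith) (by linarith)
    have hconvz : Tendsto (fun i => φ t (φ (e (h i)) (xs (h i)))) atTop (𝓝 (φ t w)) :=
      ((phi_cont_x φ t).continuousAt.tendsto).comp hw
    have := mem_closure_of_tendsto hconvz hev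
    rw [closure_compl] at this
    exact this hmem
  -- Claim B : ts - e → ∞
  have hB : Tendsto (fun n => ts n - e n) atTop atTop := by
    by_contra hc
    rw [tendsto_atTop_atTop] at hc
    push_neg at hc
    obtain ⟨C, hC⟩ := hc
    obtain ⟨f, hf, hfe⟩ := Filter.extraction_of_frequently_atTop
      (frequently_atTop.2 fun N₁ => (hC N₁).imp fun n hn => ⟨hn.1, hn.2⟩)
    obtain ⟨c, -, f₂, hf₂, hcc⟩ := (isCompact_Icc (a := (0:ℝ)) (b := C)).tendsto_subseq
      (fun i => ⟨by linarith [he_ts (f i)], (hfe i).le⟩ : ∀ i, ts (f i) - e (f i) ∈ Icc 0 C)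
    obtain ⟨y', hy'V₁, f₃, hf₃, hy'⟩ := hV₁cpt.tendsto_subseq
      (fun i => heV₁ (f (f₂ i)) : ∀ i, φ (e (f (f₂ i))) (xs (f (f₂ i))) ∈ V₁)
    set h' : ℕ → ℕ := fun i => f (f₂ (f₃ i)) with hh'def
    have hh' : Tendsto h' atTop atTop := ((hf.comp hf₂).comp hf₃).tendsto_atTop
    have hy'conv : Tendsto (fun i => φ (e (h' i)) (xs (h' i))) atTop (𝓝 y') := hy'
    have hccc : Tendsto (fun i => ts (h' i) - e (h' i)) atTop (𝓝 c) := hcc.comp hf₃.tendsto_atTop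
    have hjoint : Tendsto (fun i => φ (ts (h' i) - e (h' i)) (φ (e (h' i)) (xs (h' i))))
        atTop (𝓝 (φ c y')) :=
      (φ.cont'.tendsto (c, y')).comp (hccc.prodMk_nhds hy'conv)
    have heq : ∀ i, φ (ts (h' i) - e (h' i)) (φ (e (h' i)) (xs (h' i)))
        = φ (ts (h' i)) (xs (h' i)) := by
      intro i
      rw [← φ.map_add, sub_add_cancel]
    have hk2 : Tendsto (fun i => φ (ts (h' i)) (xs (h' i))) atTop (𝓝 k) := hconv.comp hh'
    have hkey : φ c y' = k := tendsto_nhds_unique (hjoint.congr heq) hk2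
    have hy'K : y' ∈ K := by
      have h1 : φ (-c) (φ c y') ∈ K := hkey ▸ hKinv k hkK (-c)
      rwa [← φ.map_add, neg_add_cancel, φ.map_zero_apply] at h1
    exact P1gen h' hh' y' hy'conv (-1) (by norm_num) (hKintV₁ (hKinv y' hy'K (-1)))
  have P1y : ∀ t : ℝ, t < 0 → φ t y ∉ interior V₁ :=
    P1gen g hg.tendsto_atTop y hyg
  -- pick z' in alpha(y)
  obtain ⟨z', hz'α⟩ := alphaLim_nonempty φ y
  obtain ⟨τ, hτb, hτconv⟩ := alphaLim_seq φ hz'α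
  -- the orbit of z' avoids interior V₁
  have hz'avoid : ∀ t : ℝ, φ t z' ∉ interior V₁ := by
    intro t
    have hconvz : Tendsto (fun m => φ t (φ (τ m) y)) atTop (𝓝 (φ t z')) :=
      ((phi_cont_x φ t).continuousAt.tendsto).comp hτconv
    have hev : ∀ᶠ m in atTop, φ t (φ (τ m) y) ∈ (interior V₁)ᶜ := by
      have hge : ∀ᶠ m : ℕ in atTop, t ≤ (m : ℝ) :=
        tendsto_natCast_atTop_atTop.eventually_ge_atTop t
      refine hge.mono fun m hm => ?_
      have heq : φ t (φ (τ m) y) = φ (t + τ m) y := (φ.map_add _ _ _).symm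
      rw [Set.mem_compl_iff, heq]
      exact P1y _ (by have := hτb m; linarith)
    exact isOpen_interior.isClosed_compl.mem_of_tendsto hconvz hev
  -- z' is not in I(K)
  have hz'I : z' ∉ Iset φ K := by
    rintro (⟨⟨q, hq⟩, hsub⟩ | ⟨⟨q, hq⟩, hsub⟩)
    · have h1 : q ∈ closure {w | ∃ s : ℝ, (1:ℝ) ≤ s ∧ φ s z' = w} :=
        mem_iInter₂.1 hq 1 (mem_Ioi.2 one_pos)
      have h2 : {w | ∃ s : ℝ, (1:ℝ) ≤ s ∧ φ s z' = w} ⊆ (interior V₁)ᶜ := by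
        rintro w ⟨s, -, rfl⟩; exact hz'avoid s
      exact (isOpen_interior.isClosed_compl.closure_subset_iff.2 h2) h1 (hKintV₁ (hsub hq))
    · have h1 : q ∈ closure {w | ∃ s : ℝ, s ≤ (-1:ℝ) ∧ φ s z' = w} :=
        mem_iInter₂.1 hq (-1) (mem_Iio.2 (by norm_num))
      have h2 : {w | ∃ s : ℝ, s ≤ (-1:ℝ) ∧ φ s z' = w} ⊆ (interior V₁)ᶜ := by
        rintro w ⟨s, -, rfl⟩; exact hz'avoid s
      exact (isOpen_interior.isClosed_compl.closure_subset_iff.2 h2) h1 (hKintV₁ (hsub hq))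
  -- backward approximations of k' along x
  have hu : ∀ m : ℕ, ∃ um : ℝ, um ≤ τ m + T - m ∧ dist (φ um x) k' < 1/(m+1) := by
    intro m
    have htneg : min (τ m + T - m) (-1) < 0 := lt_of_le_of_lt (min_le_right _ _) (by norm_num)
    have h1 := mem_iInter₂.1 hk'α _ (mem_Iio.2 htneg)
    obtain ⟨w, ⟨s, hs, rfl⟩, hd⟩ := Metric.mem_closure_iff.1 h1 (1/(m+1)) (by positivity)
    exact ⟨s, le_trans hs (min_le_left _ _), by rwa [dist_comm]⟩
  choose u hu1 hu2 using hu
  -- diagonal choice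
  have hnm : ∀ m : ℕ, ∃ n : ℕ,
      dist (φ (τ m) (φ (e (g n)) (xs (g n)))) (φ (τ m) y) < 1/(m+1) ∧
      (m:ℝ) ≤ ts (g n) - e (g n) ∧
      dist (φ (ts (g n)) (xs (g n))) k < 1/(m+1) ∧
      dist (φ (u m) (xs (g n))) (φ (u m) x) < 1/(m+1) := by
    intro m
    have c1 : ∀ᶠ n in atTop,
        dist (φ (τ m) (φ (e (g n)) (xs (g n)))) (φ (τ m) y) < 1/(m+1) :=
      Metric.tendsto_nhds.1 (((phi_cont_x φ (τ m)).continuousAt.tendsto).comp hyg)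
        _ (by positivity)
    have c2 : ∀ᶠ n in atTop, (m:ℝ) ≤ ts (g n) - e (g n) :=
      ((hB.comp hg.tendsto_atTop).eventually_ge_atTop _)
    have c3 : ∀ᶠ n in atTop, dist (φ (ts (g n)) (xs (g n))) k < 1/(m+1) :=
      Metric.tendsto_nhds.1 (hconv.comp hg.tendsto_atTop) _ (by positivity)
    have c4 : ∀ᶠ n in atTop, dist (φ (u m) (xs (g n))) (φ (u m) x) < 1/(m+1) :=
      Metric.tendsto_nhds.1 (((phi_cont_x φ (u m)).continuousAt.tendsto).comp
        (hxs.comp hg.tendsto_atTop)) _ (by positivity)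
    obtain ⟨n, ⟨h1, h2⟩, h3, h4⟩ := (((c1.and c2).and (c3.and c4)).exists)
    exact ⟨n, h1, h2, h3, h4⟩
  choose nm hc1 hc2 hc3 hc4 using hnm
  have harg : ∀ (A B : ℝ) (z : M), A = B → φ A z = φ B z := fun A B z h => by rw [h]
  have hws_conv : Tendsto (fun m => φ (τ m + e (g (nm m))) (xs (g (nm m)))) atTop (𝓝 z') := by
    rw [tendsto_iff_dist_tendsto_zero]
    have hbound : ∀ m : ℕ, dist (φ (τ m + e (g (nm m))) (xs (g (nm m)))) z'
        ≤ 1/(m+1) + dist (φ (τ m) y) z' := by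
      intro m
      refine (dist_triangle _ (φ (τ m) y) z').trans (add_le_add ?_ le_rfl)
      rw [φ.map_add]
      exact (hc1 m).le
    refine squeeze_zero (fun m => dist_nonneg) hbound ?_
    have h2 : Tendsto (fun m => dist (φ (τ m) y) z') atTop (𝓝 0) :=
      tendsto_iff_dist_tendsto_zero.1 hτconv
    simpa using tendsto_one_div_add_atTop_nhds_zero_nat.add h2
  have has_top : Tendsto (fun m => ts (g (nm m)) - e (g (nm m)) - τ m) atTop atTop := by
    apply tendsto_atTop_mono _ tendsto_natCast_atTop_atTop
    intro m
    have h1 := hc2 m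
    have h2 := hτb m
    linarith
  have hbs_bot : Tendsto (fun m => u m - e (g (nm m)) - τ m) atTop atBot := by
    have hneg : Tendsto (fun m : ℕ => -(m:ℝ)) atTop atBot :=
      tendsto_neg_atTop_atBot.comp tendsto_natCast_atTop_atTop
    apply tendsto_atBot_mono _ hneg
    intro m
    have h1 := hu1 m
    have h2 := heT (g (nm m))
    linarith
  have hfwd : Tendsto
      (fun m => φ (ts (g (nm m)) - e (g (nm m)) - τ m) (φ (τ m + e (g (nm m))) (xs (g (nm m)))))
      atTop (𝓝 k) := by
    have hbase : Tendsto (fun m => φ (ts (g (nm m))) (xs (g (nm m)))) atTop (𝓝 k) := by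
      rw [tendsto_iff_dist_tendsto_zero]
      exact squeeze_zero (fun m => dist_nonneg) (fun m => (hc3 m).le)
        tendsto_one_div_add_atTop_nhds_zero_nat
    refine hbase.congr fun m => ?_
    rw [← φ.map_add]
    exact harg _ _ _ (by ring)
  have hbwd : Tendsto
      (fun m => φ (u m - e (g (nm m)) - τ m) (φ (τ m + e (g (nm m))) (xs (g (nm m)))))
      atTop (𝓝 k') := by
    have hbase : Tendsto (fun m => φ (u m) (xs (g (nm m)))) atTop (𝓝 k') := by
      rw [tendsto_iff_dist_tendsto_zero]
      have hbound : ∀ m : ℕ, dist (φ (u m) (xs (g (nm m)))) k' ≤ 1/(m+1) + 1/(m+1) := by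
        intro m
        refine (dist_triangle _ (φ (u m) x) k').trans (add_le_add (hc4 m).le (hu2 m).le)
      refine squeeze_zero (fun m => dist_nonneg) hbound ?_
      have h0 : Tendsto (fun m : ℕ => 1/((m:ℝ)+1) + 1/((m:ℝ)+1)) atTop (𝓝 (0 + 0)) :=
        tendsto_one_div_add_atTop_nhds_zero_nat.add tendsto_one_div_add_atTop_nhds_zero_nat
      rw [add_zero] at h0
      exact h0
    refine hbase.congr fun m => ?_
    rw [← φ.map_add]
    exact harg _ _ _ (by ring)
  exact ⟨z', hz'I, (k, k'), ⟨_, _, _, hws_conv, has_top, hbs_bot, hfwd, hbwd⟩,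
    Set.mk_mem_prod hkK hk'K⟩

end Main


section Reverse
variable [MetricSpace M] (φ : Flow ℝ M)

lemma reverse_apply (t : ℝ) (x : M) : φ.reverse t x = φ (-t) x := rfl

lemma omegaLim_reverse (x : M) : omegaLim φ.reverse x = alphaLim φ x := by
  unfold omegaLim alphaLim
  ext q
  simp only [mem_iInter, mem_Ioi, mem_Iio]
  constructor
  · intro h t ht
    have h1 := h (-t) (by linarith)
    have hset : {y | ∃ s : ℝ, -t ≤ s ∧ φ.reverse s x = y} = {y | ∃ s : ℝ, s ≤ t ∧ φ s x = y} := by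
      ext w
      constructor
      · rintro ⟨s, hs, rfl⟩; exact ⟨-s, by linarith, rfl⟩
      · rintro ⟨s, hs, rfl⟩; exact ⟨-s, by linarith, by rw [reverse_apply, neg_neg]⟩
    rwa [hset] at h1
  · intro h t ht
    have h1 := h (-t) (by linarith)
    have hset : {y | ∃ s : ℝ, s ≤ -t ∧ φ s x = y} = {y | ∃ s : ℝ, t ≤ s ∧ φ.reverse s x = y} := by
      ext w
      constructor
      · rintro ⟨s, hs, rfl⟩; exact ⟨-s, by linarith, by rw [reverse_apply, neg_neg]⟩
      · rintro ⟨s, hs, rfl⟩; exact ⟨-s, by linarith, rfl⟩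
    rwa [hset] at h1

lemma alphaLim_reverse (x : M) : alphaLim φ.reverse x = omegaLim φ x := by
  unfold omegaLim alphaLim
  ext q
  simp only [mem_iInter, mem_Ioi, mem_Iio]
  constructor
  · intro h t ht
    have h1 := h (-t) (by linarith)
    have hset : {y | ∃ s : ℝ, s ≤ -t ∧ φ.reverse s x = y} = {y | ∃ s : ℝ, t ≤ s ∧ φ s x = y} := by
      ext w
      constructor
      · rintro ⟨s, hs, rfl⟩; exact ⟨-s, by linarith, rfl⟩
      · rintro ⟨s, hs, rfl⟩; exact ⟨-s, by linarith, by rw [reverse_apply, neg_neg]⟩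
    rwa [hset] at h1
  · intro h t ht
    have h1 := h (-t) (by linarith)
    have hset : {y | ∃ s : ℝ, -t ≤ s ∧ φ s x = y} = {y | ∃ s : ℝ, s ≤ t ∧ φ.reverse s x = y} := by
      ext w
      constructor
      · rintro ⟨s, hs, rfl⟩; exact ⟨-s, by linarith, by rw [reverse_apply, neg_neg]⟩
      · rintro ⟨s, hs, rfl⟩; exact ⟨-s, by linarith, rfl⟩
    rwa [hset] at h1

lemma Aset_reverse (K : Set M) : Aset φ.reverse K = Rset φ K := by
  unfold Aset Rset
  ext z
  rw [mem_setOf_eq, mem_setOf_eq, omegaLim_reverse]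

lemma Rset_reverse (K : Set M) : Rset φ.reverse K = Aset φ K := by
  unfold Aset Rset
  ext z
  rw [mem_setOf_eq, mem_setOf_eq, alphaLim_reverse]

lemma Iset_reverse (K : Set M) : Iset φ.reverse K = Iset φ K := by
  unfold Iset
  rw [Aset_reverse, Rset_reverse, union_comm]

lemma Jplus_reverse (x : M) : Jplus φ.reverse x = Jminus φ x := by
  unfold Jplus Jminus
  ext q
  constructor
  · rintro ⟨xs, ts, h1, h2, h3⟩
    exact ⟨xs, fun n => -(ts n), h1, tendsto_neg_atTop_atBot.comp h2, h3⟩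
  · rintro ⟨xs, ts, h1, h2, h3⟩
    refine ⟨xs, fun n => -(ts n), h1, tendsto_neg_atBot_atTop.comp h2, h3.congr fun n => ?_⟩
    rw [reverse_apply, neg_neg]

lemma Jstar_reverse {x : M} {p q : M} (h : (p, q) ∈ Jstar φ.reverse x) :
    (q, p) ∈ Jstar φ x := by
  obtain ⟨xs, ts, ss, h1, h2, h3, h4, h5⟩ := h
  exact ⟨xs, fun n => -(ss n), fun n => -(ts n), h1,
    tendsto_neg_atBot_atTop.comp h3, tendsto_neg_atTop_atBot.comp h2, h5, h4⟩

lemma posOrbit_reverse (x : M) : posOrbit φ.reverse x = negOrbit φ x := by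
  unfold posOrbit negOrbit
  ext w
  constructor
  · rintro ⟨t, ht, rfl⟩; exact ⟨-t, by linarith, rfl⟩
  · rintro ⟨t, ht, rfl⟩; exact ⟨-t, by linarith, by rw [reverse_apply, neg_neg]⟩

lemma negOrbit_reverse (x : M) : negOrbit φ.reverse x = posOrbit φ x := by
  unfold posOrbit negOrbit
  ext w
  constructor
  · rintro ⟨t, ht, rfl⟩; exact ⟨-t, by linarith, rfl⟩
  · rintro ⟨t, ht, rfl⟩; exact ⟨-t, by linarith, by rw [reverse_apply, neg_neg]⟩

lemma NonSaddle_reverse (K : Set M) (h : NonSaddle φ K) : NonSaddle φ.reverse K := by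
  intro U hU
  obtain ⟨V, h1, h2, h3⟩ := h U hU
  refine ⟨V, h1, h2, fun z hz => ?_⟩
  rcases h3 z hz with hp | hn
  · right; rwa [negOrbit_reverse]
  · left; rwa [posOrbit_reverse]

lemma IsIsolatedInv_reverse (K : Set M) (h : IsIsolatedInv φ K) :
    IsIsolatedInv φ.reverse K := by
  obtain ⟨h1, h2, N, h3, h4, h5⟩ := h
  refine ⟨h1, fun z hz t => h2 z hz (-t), N, h3, h4, fun z hz h6 => h5 z hz fun t => ?_⟩
  have h7 := h6 (-t)
  rwa [reverse_apply, neg_neg] at h7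

end Reverse

/-- on a compact space, if `K` has a positively or negatively dissonant
point then it has an externally dissonant point. -/
theorem stmt16 {M : Type*} [MetricSpace M] [CompactSpace M]
    (φ : Flow ℝ M) (K : Set M)
    (hIso : IsIsolatedInv φ K) (hNS : NonSaddle φ K)
    (hd : ∃ x : M, PosDissonant φ K x ∨ NegDissonant φ K x) :
    ∃ y : M, ExtDissonant φ K y := by
  obtain ⟨x, hx | hx⟩ := hd
  · exact key_pos φ K hIso hNS hx
  · have hrev : PosDissonant φ.reverse K x := by
      obtain ⟨h1, h2, h3⟩ := hx
      refine ⟨?_, ?_, ?_⟩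
      · rwa [Iset_reverse]
      · rwa [Aset_reverse]
      · rwa [Jplus_reverse]
    obtain ⟨y, hy1, ⟨p, q⟩, hpq, hmem⟩ := key_pos φ.reverse K
      (IsIsolatedInv_reverse φ K hIso) (NonSaddle_reverse φ K hNS) hrev
    rw [Iset_reverse] at hy1
    obtain ⟨hpK, hqK⟩ := hmem
    exact ⟨y, hy1, (q, p), Jstar_reverse φ hpq, Set.mk_mem_prod hqK hpK⟩
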